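/- Upper bound on the effective Hamiltonian (power case): if (u, m, H̄) is a classical solution of the power-type ergodic MFG system, then H̄ ≤ |P|²/2 − α^q. (The proof uses that v ≥ 0 and Jensen's inequality ∫_Q m^{q+1} dy ≥ (∫_Q m dy)^{q+1} = 1.) -/

import Mathlib

open MeasureTheory Real

/-- Partial derivative in direction `i`. -/
noncomputable def pd {n : ℕ} (i : Fin n) (f : (Fin n → ℝ) → ℝ) (x : Fin n → ℝ) : ℝ :=
  fderiv ℝ f x (Pi.single i 1)

/-- Laplacian: sum of second partial derivatives. -/
noncomputable def lap {n : ℕ} (f : (Fin n → ℝ) → ℝ) (x : Fin n → ℝ) : ℝ :=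
  ∑ i, pd i (pd i f) x

/-- Divergence of a vector field. -/
noncomputable def dvg {n : ℕ} (F : (Fin n → ℝ) → Fin n → ℝ) (x : Fin n → ℝ) : ℝ :=
  ∑ i, pd i (fun y => F y i) x

/-- `ℤⁿ`-periodicity. -/
def ZPeriodic {n : ℕ} (f : (Fin n → ℝ) → ℝ) : Prop :=
  ∀ (k : Fin n → ℤ) (x : Fin n → ℝ), f (x + fun i => (k i : ℝ)) = f x

/-- The unit cube `Q = [0,1]ⁿ`. -/
def unitCube (n : ℕ) : Set (Fin n → ℝ) := Set.Icc 0 1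

/-- A classical solution `(u, m, H)` of the power-type ergodic MFG system
`-Δu + ½|∇u+P|² - v - αᑫ mᑫ = H`, `-Δm - div(m(∇u+P)) = 0`, `∫ u = 0`, `∫ m = 1`. -/
structure PowerMFG {n : ℕ} (v : (Fin n → ℝ) → ℝ) (P : Fin n → ℝ) (α q : ℝ)
    (u m : (Fin n → ℝ) → ℝ) (H : ℝ) : Prop where
  hu : ContDiff ℝ 2 u
  hm : ContDiff ℝ 2 m
  hup : ZPeriodic u
  hmp : ZPeriodic m
  hmpos : ∀ x, 0 < m x
  hHJB : ∀ x, -lap u x + (∑ i, (pd i u x + P i) ^ 2) / 2 - v x - α ^ q * (m x) ^ q = H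
  hFP : ∀ x, -lap m x - dvg (fun y j => m y * (pd j u y + P j)) x = 0
  humean : (∫ y in unitCube n, u y) = 0
  hmmean : (∫ y in unitCube n, m y) = 1

section helpers
variable {n : ℕ} {f g : (Fin n → ℝ) → ℝ} {x : Fin n → ℝ} {i : Fin n}

lemma pd_add (hf : DifferentiableAt ℝ f x) (hg : DifferentiableAt ℝ g x) :
    pd i (fun y => f y + g y) x = pd i f x + pd i g x := by
  unfold pd; rw [fderiv_fun_add hf hg]; rfl

lemma pd_sub (hf : DifferentiableAt ℝ f x) (hg : DifferentiableAt ℝ g x) :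
    pd i (fun y => f y - g y) x = pd i f x - pd i g x := by
  unfold pd; rw [fderiv_fun_sub hf hg]; rfl

lemma pd_mul (hf : DifferentiableAt ℝ f x) (hg : DifferentiableAt ℝ g x) :
    pd i (fun y => f y * g y) x = pd i f x * g x + f x * pd i g x := by
  unfold pd; rw [fderiv_fun_mul hf hg]
  simp [ContinuousLinearMap.add_apply, ContinuousLinearMap.smul_apply]
  ring

lemma contDiff_pd (hf : ContDiff ℝ 2 f) (i : Fin n) : ContDiff ℝ 1 (pd i f) :=
  (hf.fderiv_right (by norm_num)).clm_apply contDiff_const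

lemma fderiv_shift (hf : Differentiable ℝ f) (c x : Fin n → ℝ) :
    fderiv ℝ (fun y => f (y + c)) x = fderiv ℝ f (x + c) := by
  have h1 : HasFDerivAt (fun y : Fin n → ℝ => y + c)
      (ContinuousLinearMap.id ℝ (Fin n → ℝ)) x := (hasFDerivAt_id x).add_const c
  have h2 := ((hf (x + c)).hasFDerivAt).comp x h1
  simpa [Function.comp_def] using h2.fderiv

lemma ZPeriodic.pd_per (hp : ZPeriodic f) (hf : Differentiable ℝ f) (i : Fin n) :
    ZPeriodic (pd i f) := by
  intro k x
  have hfun : (fun y => f (y + fun j => (k j : ℝ))) = f := funext fun y => hp k y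
  have h := fderiv_shift hf (fun j => (k j : ℝ)) x
  rw [hfun] at h
  unfold pd
  rw [← h]

end helpers

lemma insertNth_one_eq {k : ℕ} (i : Fin (k + 1)) (y : Fin k → ℝ) :
    i.insertNth (1:ℝ) y = i.insertNth (0:ℝ) y + fun j => ((Pi.single i 1 : Fin (k+1) → ℤ) j : ℝ) := by
  funext j
  rcases eq_or_ne j i with rfl | hj
  · simp
  · rcases Fin.exists_succAbove_eq hj with ⟨l, rfl⟩
    simp [Fin.insertNth_apply_succAbove, Pi.single_apply, Fin.succAbove_ne i l]

lemma periodic_div_integral_zero {k : ℕ} (F : Fin (k + 1) → (Fin (k + 1) → ℝ) → ℝ)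
    (hF : ∀ i, ContDiff ℝ 1 (F i)) (hFp : ∀ i, ZPeriodic (F i)) :
    (∫ x in Set.Icc (0 : Fin (k+1) → ℝ) 1, ∑ i, fderiv ℝ (F i) x (Pi.single i 1)) = 0 := by
  have hle : (0 : Fin (k+1) → ℝ) ≤ 1 := fun i => by norm_num
  have key := integral_divergence_of_hasFDerivAt_off_countable'
    (0 : Fin (k+1) → ℝ) 1 hle F (fun i x => fderiv ℝ (F i) x) ∅ Set.countable_empty
    (fun i => (hF i).continuous.continuousOn)
    (fun x _ i => ((hF i).differentiable one_ne_zero x).hasFDerivAt)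
    (ContinuousOn.integrableOn_compact isCompact_Icc
      (Continuous.continuousOn (continuous_finset_sum _ fun i _ =>
        ((hF i).continuous_fderiv one_ne_zero).clm_apply continuous_const)))
  rw [key]
  apply Finset.sum_eq_zero
  intro i _
  have heq : ∀ x : Fin k → ℝ, F i (i.insertNth ((1 : Fin (k+1) → ℝ) i) x)
      = F i (i.insertNth ((0 : Fin (k+1) → ℝ) i) x) := by
    intro x
    have h0 : ((0 : Fin (k+1) → ℝ) i) = (0:ℝ) := rfl
    have h1 : ((1 : Fin (k+1) → ℝ) i) = (1:ℝ) := rfl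
    rw [h0, h1, insertNth_one_eq i x, hFp i (Pi.single i 1) (i.insertNth (0:ℝ) x)]
  simp only [heq, sub_self]

/-- Upper bound on the effective Hamiltonian (power case). -/
theorem power_mfg_H_upper_bound {n : ℕ} (hn : 1 ≤ n)
    (v : (Fin n → ℝ) → ℝ) (hv0 : ∀ x, 0 ≤ v x) (hvlip : ∃ K, LipschitzWith K v) (hvper : ZPeriodic v)
    (P : Fin n → ℝ) (α q : ℝ) (hα : 0 ≤ α) (hq : 0 < q)
    (u m : (Fin n → ℝ) → ℝ) (H : ℝ)
    (h : PowerMFG v P α q u m H) :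
    H ≤ (∑ i, (P i) ^ 2) / 2 - α ^ q := by
  obtain ⟨hu, hm, hup, hmp, hmpos, hHJB, hFP, humean, hmmean⟩ := h
  obtain ⟨k, rfl⟩ : ∃ k, n = k + 1 := ⟨n - 1, (Nat.succ_pred_eq_of_pos hn).symm⟩
  -- basic regularity
  have hu1 : ContDiff ℝ 1 u := hu.of_le (by norm_num)
  have hm1 : ContDiff ℝ 1 m := hm.of_le (by norm_num)
  have hud : Differentiable ℝ u := hu1.differentiable one_ne_zero
  have hmd : Differentiable ℝ m := hm1.differentiable one_ne_zero
  have hduC : ∀ i, ContDiff ℝ 1 (pd i u) := contDiff_pd hu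
  have hdmC : ∀ i, ContDiff ℝ 1 (pd i m) := contDiff_pd hm
  have hvc : Continuous v := hvlip.choose_spec.continuous
  -- the vector field for the divergence theorem
  set F : Fin (k+1) → (Fin (k+1) → ℝ) → ℝ := fun i y =>
    u y * pd i m y - m y * pd i u y + u y * (m y * (pd i u y + P i)) with hF_def
  have hgC : ∀ i, ContDiff ℝ 1 (fun y => m y * (pd i u y + P i)) :=
    fun i => hm1.mul ((hduC i).add contDiff_const)
  have hFC : ∀ i, ContDiff ℝ 1 (F i) := fun i =>
    ((hu1.mul (hdmC i)).sub (hm1.mul (hduC i))).add (hu1.mul (hgC i))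
  have hFper : ∀ i, ZPeriodic (F i) := by
    intro i kk x
    simp only [hF_def]
    rw [hup kk x, hmp kk x, hup.pd_per hud i kk x, hmp.pd_per hmd i kk x]
  -- pointwise divergence identity
  have hsum : ∀ x, (∑ i, fderiv ℝ (F i) x (Pi.single i 1)) =
      m x * ((∑ i, pd i u x * (pd i u x + P i)) - lap u x) := by
    intro x
    have hterm : ∀ i, fderiv ℝ (F i) x (Pi.single i 1) =
        u x * (pd i (pd i m) x + pd i (fun y => m y * (pd i u y + P i)) x)
        + m x * (pd i u x * (pd i u x + P i) - pd i (pd i u) x) := by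
      intro i
      show pd i (F i) x = _
      have d1 : DifferentiableAt ℝ (fun y => u y * pd i m y) x :=
        (hud x).mul ((hdmC i).differentiable one_ne_zero x)
      have d2 : DifferentiableAt ℝ (fun y => m y * pd i u y) x :=
        (hmd x).mul ((hduC i).differentiable one_ne_zero x)
      have d3 : DifferentiableAt ℝ (fun y => m y * (pd i u y + P i)) x :=
        ((hgC i).differentiable one_ne_zero) x
      have d4 : DifferentiableAt ℝ (fun y => u y * (m y * (pd i u y + P i))) x :=
        (hud x).mul d3
      have e : pd i (F i) x = pd i (fun y => u y * pd i m y - m y * pd i u y) x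
          + pd i (fun y => u y * (m y * (pd i u y + P i))) x :=
        pd_add (d1.sub d2) d4
      rw [e, pd_sub d1 d2,
        pd_mul (hud x) ((hdmC i).differentiable one_ne_zero x),
        pd_mul (hmd x) ((hduC i).differentiable one_ne_zero x),
        pd_mul (hud x) d3]
      ring
    rw [Finset.sum_congr rfl fun i _ => hterm i]
    rw [Finset.sum_add_distrib, ← Finset.mul_sum, ← Finset.mul_sum]
    have hc : (∑ i, (pd i (pd i m) x + pd i (fun y => m y * (pd i u y + P i)) x)) = 0 := by
      have := hFP x
      simp only [lap, dvg] at this ⊢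
      rw [Finset.sum_add_distrib]
      linarith
    rw [hc, mul_zero, zero_add, Finset.sum_sub_distrib]
    simp only [lap]
  -- integral of the divergence vanishes
  have hdiv : (∫ x in unitCube (k+1),
      m x * ((∑ i, pd i u x * (pd i u x + P i)) - lap u x)) = 0 := by
    have h0 := periodic_div_integral_zero F hFC hFper
    simp_rw [hsum] at h0
    exact h0
  -- continuity facts
  have hQc : IsCompact (unitCube (k+1)) := isCompact_Icc
  have hQm : MeasurableSet (unitCube (k+1)) := measurableSet_Icc
  have hlapc : Continuous (lap u) := by
    unfold lap pd
    exact continuous_finset_sum _ fun i _ =>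
      ((hduC i).continuous_fderiv one_ne_zero).clm_apply continuous_const
  have hSc : Continuous (fun x => ∑ i, pd i u x * (pd i u x + P i)) :=
    continuous_finset_sum _ fun i _ =>
      ((hduC i).continuous.mul ((hduC i).continuous.add continuous_const))
  have hTc : Continuous (fun x => (∑ i, (pd i u x) ^ 2) / 2) :=
    (continuous_finset_sum _ fun i _ => (hduC i).continuous.pow 2).div_const 2
  have hrc : Continuous (fun x => m x ^ (q + 1)) :=
    hm1.continuous.rpow_const fun x => Or.inr (by linarith)
  -- integrability of all pieces
  have IA : IntegrableOn (fun x => m x * ((∑ i, pd i u x * (pd i u x + P i)) - lap u x))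
      (unitCube (k+1)) volume :=
    ((hm1.continuous.mul (hSc.sub hlapc)).continuousOn).integrableOn_compact hQc
  have IB : IntegrableOn (fun x => m x * ((∑ i, (P i) ^ 2) / 2)) (unitCube (k+1)) volume :=
    ((hm1.continuous.mul continuous_const).continuousOn).integrableOn_compact hQc
  have IC : IntegrableOn (fun x => m x * ((∑ i, (pd i u x) ^ 2) / 2)) (unitCube (k+1)) volume :=
    ((hm1.continuous.mul hTc).continuousOn).integrableOn_compact hQc
  have ID : IntegrableOn (fun x => m x * v x) (unitCube (k+1)) volume :=
    ((hm1.continuous.mul hvc).continuousOn).integrableOn_compact hQc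
  have IE : IntegrableOn (fun x => α ^ q * m x ^ (q + 1)) (unitCube (k+1)) volume :=
    ((continuous_const.mul hrc).continuousOn).integrableOn_compact hQc
  have Im : IntegrableOn m (unitCube (k+1)) volume :=
    (hm1.continuous.continuousOn).integrableOn_compact hQc
  -- pointwise decomposition from the HJB equation
  have hpoint : ∀ x, m x * H =
      m x * ((∑ i, pd i u x * (pd i u x + P i)) - lap u x)
      + m x * ((∑ i, (P i) ^ 2) / 2)
      - m x * ((∑ i, (pd i u x) ^ 2) / 2)
      - m x * v x
      - α ^ q * m x ^ (q + 1) := by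
    intro x
    have h1 := hHJB x
    have hr : m x ^ (q + 1) = m x ^ q * m x := Real.rpow_add_one (hmpos x).ne' q
    have hexp : (∑ i, (pd i u x + P i) ^ 2) =
        2 * (∑ i, pd i u x * (pd i u x + P i)) + (∑ i, (P i) ^ 2)
          - (∑ i, (pd i u x) ^ 2) := by
      rw [Finset.mul_sum, ← Finset.sum_add_distrib, ← Finset.sum_sub_distrib]
      exact Finset.sum_congr rfl fun i _ => by ring
    rw [hr]
    linear_combination (-(m x)) * h1 + (m x / 2) * hexp
  -- the probability measure on the cube
  have hprob : IsProbabilityMeasure (volume.restrict (unitCube (k+1))) := by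
    constructor
    rw [Measure.restrict_apply_univ]
    show volume (Set.Icc (0 : Fin (k+1) → ℝ) 1) = 1
    rw [Real.volume_Icc_pi]
    simp
  -- Jensen's inequality
  have hJ : (1 : ℝ) ≤ ∫ x in unitCube (k+1), m x ^ (q + 1) := by
    have hconv : ConvexOn ℝ (Set.Ici 0) (fun t : ℝ => t ^ (q + 1)) :=
      convexOn_rpow (by linarith)
    have hJ0 := hconv.map_integral_le (μ := volume.restrict (unitCube (k+1)))
      (f := m)
      (fun t ht => (Real.continuousAt_rpow_const t (q+1) (Or.inr (by linarith))).continuousWithinAt)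
      isClosed_Ici
      (Filter.Eventually.of_forall fun x => Set.mem_Ici.mpr (hmpos x).le)
      Im
      ((hrc.continuousOn).integrableOn_compact hQc)
    have hmm : (∫ x, m x ∂(volume.restrict (unitCube (k+1)))) = 1 := hmmean
    rw [hmm, Real.one_rpow] at hJ0
    exact hJ0
  -- put everything together
  have hH : H = (∫ x in unitCube (k+1),
        m x * ((∑ i, pd i u x * (pd i u x + P i)) - lap u x))
      + (∫ x in unitCube (k+1), m x * ((∑ i, (P i) ^ 2) / 2))
      - (∫ x in unitCube (k+1), m x * ((∑ i, (pd i u x) ^ 2) / 2))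
      - (∫ x in unitCube (k+1), m x * v x)
      - (∫ x in unitCube (k+1), α ^ q * m x ^ (q + 1)) := by
    have h1 : H = ∫ x in unitCube (k+1), m x * H := by
      rw [integral_mul_const, hmmean, one_mul]
    have e1 : (∫ x in unitCube (k+1),
        (m x * ((∑ i, pd i u x * (pd i u x + P i)) - lap u x)
          + m x * ((∑ i, (P i) ^ 2) / 2)
          - m x * ((∑ i, (pd i u x) ^ 2) / 2)
          - m x * v x
          - α ^ q * m x ^ (q + 1))) =
        (∫ x in unitCube (k+1),
        (m x * ((∑ i, pd i u x * (pd i u x + P i)) - lap u x)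
          + m x * ((∑ i, (P i) ^ 2) / 2)
          - m x * ((∑ i, (pd i u x) ^ 2) / 2)
          - m x * v x))
        - ∫ x in unitCube (k+1), α ^ q * m x ^ (q + 1) :=
      integral_sub (((IA.add IB).sub IC).sub ID) IE
    have e2 : (∫ x in unitCube (k+1),
        (m x * ((∑ i, pd i u x * (pd i u x + P i)) - lap u x)
          + m x * ((∑ i, (P i) ^ 2) / 2)
          - m x * ((∑ i, (pd i u x) ^ 2) / 2)
          - m x * v x)) =
        (∫ x in unitCube (k+1),
        (m x * ((∑ i, pd i u x * (pd i u x + P i)) - lap u x)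
          + m x * ((∑ i, (P i) ^ 2) / 2)
          - m x * ((∑ i, (pd i u x) ^ 2) / 2)))
        - ∫ x in unitCube (k+1), m x * v x :=
      integral_sub ((IA.add IB).sub IC) ID
    have e3 : (∫ x in unitCube (k+1),
        (m x * ((∑ i, pd i u x * (pd i u x + P i)) - lap u x)
          + m x * ((∑ i, (P i) ^ 2) / 2)
          - m x * ((∑ i, (pd i u x) ^ 2) / 2))) =
        (∫ x in unitCube (k+1),
        (m x * ((∑ i, pd i u x * (pd i u x + P i)) - lap u x)
          + m x * ((∑ i, (P i) ^ 2) / 2)))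
        - ∫ x in unitCube (k+1), m x * ((∑ i, (pd i u x) ^ 2) / 2) :=
      integral_sub (IA.add IB) IC
    have e4 : (∫ x in unitCube (k+1),
        (m x * ((∑ i, pd i u x * (pd i u x + P i)) - lap u x)
          + m x * ((∑ i, (P i) ^ 2) / 2))) =
        (∫ x in unitCube (k+1), m x * ((∑ i, pd i u x * (pd i u x + P i)) - lap u x))
        + ∫ x in unitCube (k+1), m x * ((∑ i, (P i) ^ 2) / 2) :=
      integral_add IA IB
    have e0 : (∫ x in unitCube (k+1), m x * H) = ∫ x in unitCube (k+1),
        (m x * ((∑ i, pd i u x * (pd i u x + P i)) - lap u x)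
          + m x * ((∑ i, (P i) ^ 2) / 2)
          - m x * ((∑ i, (pd i u x) ^ 2) / 2)
          - m x * v x
          - α ^ q * m x ^ (q + 1)) :=
      integral_congr_ae (Filter.Eventually.of_forall fun x => hpoint x)
    rw [h1, e0, e1, e2, e3, e4]
  have hB : (∫ x in unitCube (k+1), m x * ((∑ i, (P i) ^ 2) / 2))
      = (∑ i, (P i) ^ 2) / 2 := by
    rw [integral_mul_const, hmmean, one_mul]
  have hC : 0 ≤ ∫ x in unitCube (k+1), m x * ((∑ i, (pd i u x) ^ 2) / 2) :=
    setIntegral_nonneg hQm fun x _ => mul_nonneg (hmpos x).le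
      (by positivity)
  have hD : 0 ≤ ∫ x in unitCube (k+1), m x * v x :=
    setIntegral_nonneg hQm fun x _ => mul_nonneg (hmpos x).le (hv0 x)
  have hE : α ^ q ≤ ∫ x in unitCube (k+1), α ^ q * m x ^ (q + 1) := by
    rw [integral_const_mul]
    calc α ^ q = α ^ q * 1 := (mul_one _).symm
    _ ≤ α ^ q * ∫ x in unitCube (k+1), m x ^ (q + 1) :=
        mul_le_mul_of_nonneg_left hJ (Real.rpow_nonneg hα q)
  rw [hH, hdiv, hB]
  linarith
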